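/- For any polynomial P of degree at most r in the variable ζ = x^n / y^m, one has H_1 (x^𝒩 y^ℳ P(ζ)) = x^𝒩 y^ℳ · (H_{1,red} P)(ζ), where the reduced operator is H_{1,red} = ζ^{−1} Π_{l=1}^N Π_{j=0}^{n_l−1} (𝒩_l − j + n_l ζ∂_ζ) + ζ Π_{k=1}^M Π_{i=0}^{m_k−1} (ℳ_k − i − m_k ζ∂_ζ). -/

import Mathlib

open MvPolynomial

noncomputable def Dxn {N M : ℕ} (n : Fin N → ℕ) :
    Module.End ℝ (MvPolynomial (Fin N ⊕ Fin M) ℝ) :=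
  (List.ofFn fun l : Fin N =>
    ((pderiv (Sum.inl l)).toLinearMap : Module.End ℝ (MvPolynomial (Fin N ⊕ Fin M) ℝ)) ^ n l).prod

noncomputable def Dym {N M : ℕ} (m : Fin M → ℕ) :
    Module.End ℝ (MvPolynomial (Fin N ⊕ Fin M) ℝ) :=
  (List.ofFn fun k : Fin M =>
    ((pderiv (Sum.inr k)).toLinearMap : Module.End ℝ (MvPolynomial (Fin N ⊕ Fin M) ℝ)) ^ m k).prod

/-- `H₁ = y^m ∂_x^n + x^n ∂_y^m`. -/
noncomputable def H1 {N M : ℕ} (n : Fin N → ℕ) (m : Fin M → ℕ) :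
    Module.End ℝ (MvPolynomial (Fin N ⊕ Fin M) ℝ) :=
  (LinearMap.mulLeft ℝ (∏ k : Fin M, X (Sum.inr k) ^ m k)).comp (Dxn n) +
    (LinearMap.mulLeft ℝ (∏ l : Fin N, X (Sum.inl l) ^ n l)).comp (Dym m)

/-- The monomial `x^i y^j`. -/
noncomputable def mon {N M : ℕ} (i : Fin N → ℕ) (j : Fin M → ℕ) :
    MvPolynomial (Fin N ⊕ Fin M) ℝ :=
  monomial (Finsupp.equivFunOnFinite.symm (Sum.elim i j)) 1

/-- The expansion map sending a one-variable polynomial `P(ζ) = Σ_s c_s ζ^s` of degree at most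
`r` to `x^𝒩 y^ℳ P(ζ)` with `ζ = x^n / y^m`, i.e. to `Σ_s c_s x^{𝒩 + s n} y^{ℳ - s m}`. -/
noncomputable def expand {N M : ℕ} (n : Fin N → ℕ) (m : Fin M → ℕ) (𝒩 : Fin N → ℕ)
    (ℳ : Fin M → ℕ) (r : ℕ) (P : Polynomial ℝ) : MvPolynomial (Fin N ⊕ Fin M) ℝ :=
  ∑ s ∈ Finset.range (r + 1),
    P.coeff s • mon (fun l => 𝒩 l + s * n l) fun k => ℳ k - s * m k

/-- The Euler operator `ζ∂_ζ` on one-variable polynomials. -/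
noncomputable def euler : Module.End ℝ (Polynomial ℝ) :=
  (LinearMap.mulLeft ℝ (Polynomial.X : Polynomial ℝ)).comp Polynomial.derivative

/-- The reduced Hamiltonian
`H₁,red = ζ⁻¹ Π_l Π_{j<n_l} (𝒩_l - j + n_l ζ∂_ζ) + ζ Π_k Π_{i<m_k} (ℳ_k - i - m_k ζ∂_ζ)`
(the `ζ⁻¹` being implemented by `Polynomial.divX`). -/
noncomputable def H1red {N M : ℕ} (n : Fin N → ℕ) (m : Fin M → ℕ) (𝒩 : Fin N → ℕ)
    (ℳ : Fin M → ℕ) (P : Polynomial ℝ) : Polynomial ℝ :=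
  Polynomial.divX
    ((Polynomial.aeval euler
      (∏ l : Fin N, ∏ j ∈ Finset.range (n l),
        ((n l : ℝ) • Polynomial.X + Polynomial.C ((𝒩 l : ℝ) - j)))) P) +
  Polynomial.X *
    ((Polynomial.aeval euler
      (∏ k : Fin M, ∏ i ∈ Finset.range (m k),
        (Polynomial.C ((ℳ k : ℝ) - i) - (m k : ℝ) • Polynomial.X))) P)

lemma pderiv_pow_monomial {σ : Type*} (v : σ) (t : ℕ) (s : σ →₀ ℕ) (a : ℝ) :
    (((MvPolynomial.pderiv v).toLinearMap : Module.End ℝ (MvPolynomial σ ℝ)) ^ t)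
      (MvPolynomial.monomial s a)
    = MvPolynomial.monomial (s - Finsupp.single v t) (a * (s v).descFactorial t) := by
  induction t generalizing s a with
  | zero => simp
  | succ t ih =>
    rw [pow_succ', Module.End.mul_apply, ih]
    simp only [Derivation.coeFn_coe, pderiv_monomial]
    congr 1
    · rw [tsub_tsub, ← Finsupp.single_add]
    · rw [Finsupp.tsub_apply, Finsupp.single_eq_same, Nat.descFactorial_succ, Nat.cast_mul]
      ring

lemma pderiv_pow_mon_inl {N M : ℕ} (l : Fin N) (t : ℕ) (i : Fin N → ℕ) (j : Fin M → ℕ) :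
    (((pderiv (Sum.inl l)).toLinearMap :
        Module.End ℝ (MvPolynomial (Fin N ⊕ Fin M) ℝ)) ^ t) (mon i j)
    = ((i l).descFactorial t : ℝ) • mon (Function.update i l (i l - t)) j := by
  rw [mon, pderiv_pow_monomial, mon, MvPolynomial.smul_monomial, smul_eq_mul, mul_one, one_mul]
  congr 2
  · ext x
    rcases x with x | x
    · simp only [Finsupp.tsub_apply, Finsupp.coe_equivFunOnFinite_symm, Sum.elim_inl,
        Finsupp.single_apply]
      by_cases h : x = l
      · subst h; simp
      · simp [Function.update_of_ne h, Ne.symm h, fun hh : Sum.inl l = Sum.inl x => h (Sum.inl.inj hh).symm]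
    · simp only [Finsupp.tsub_apply, Finsupp.coe_equivFunOnFinite_symm, Sum.elim_inr, Sum.elim_inl,
        Finsupp.single_apply, reduceCtorEq, if_false, tsub_zero]

lemma pderiv_pow_mon_inr {N M : ℕ} (k : Fin M) (t : ℕ) (i : Fin N → ℕ) (j : Fin M → ℕ) :
    (((pderiv (Sum.inr k)).toLinearMap :
        Module.End ℝ (MvPolynomial (Fin N ⊕ Fin M) ℝ)) ^ t) (mon i j)
    = ((j k).descFactorial t : ℝ) • mon i (Function.update j k (j k - t)) := by
  rw [mon, pderiv_pow_monomial, mon, MvPolynomial.smul_monomial, smul_eq_mul, mul_one, one_mul]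
  congr 2
  · ext x
    rcases x with x | x
    · simp only [Finsupp.tsub_apply, Finsupp.coe_equivFunOnFinite_symm, Sum.elim_inr, Sum.elim_inl,
        Finsupp.single_apply, reduceCtorEq, if_false, tsub_zero]
    · simp only [Finsupp.tsub_apply, Finsupp.coe_equivFunOnFinite_symm, Sum.elim_inr,
        Finsupp.single_apply]
      by_cases h : x = k
      · subst h; simp
      · simp [Function.update_of_ne h, Ne.symm h, fun hh : Sum.inr k = Sum.inr x => h (Sum.inr.inj hh).symm]

lemma Dxn_list {N M : ℕ} (n : Fin N → ℕ) (L : List (Fin N)) (hL : L.Nodup)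
    (i : Fin N → ℕ) (j : Fin M → ℕ) :
    ((L.map fun l => ((pderiv (Sum.inl l)).toLinearMap :
        Module.End ℝ (MvPolynomial (Fin N ⊕ Fin M) ℝ)) ^ n l).prod) (mon i j)
    = ((L.map fun l => ((i l).descFactorial (n l) : ℝ)).prod) •
        mon (fun l => if l ∈ L then i l - n l else i l) j := by
  induction L with
  | nil =>
    simp only [List.map_nil, List.prod_nil, Module.End.one_apply, List.not_mem_nil, if_false,
      one_smul]
  | cons a L ih =>
    have ha : a ∉ L := (List.nodup_cons.mp hL).1
    have h2 : (fun l => if l ∈ L then i l - n l else i l) a = i a := by simp [ha]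
    rw [List.map_cons, List.prod_cons, Module.End.mul_apply, ih (List.nodup_cons.mp hL).2,
      map_smul, pderiv_pow_mon_inl, if_neg ha, List.map_cons, List.prod_cons, smul_smul]
    have h1 : (fun l => if l ∈ a :: L then i l - n l else i l)
        = Function.update (fun l => if l ∈ L then i l - n l else i l) a (i a - n a) := by
      funext x
      by_cases hx : x = a
      · subst hx; simp [ha]
      · simp [Function.update_of_ne hx, hx, List.mem_cons]
    rw [h1, mul_comm]

lemma Dym_list {N M : ℕ} (m : Fin M → ℕ) (L : List (Fin M)) (hL : L.Nodup)
    (i : Fin N → ℕ) (j : Fin M → ℕ) :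
    ((L.map fun k => ((pderiv (Sum.inr k)).toLinearMap :
        Module.End ℝ (MvPolynomial (Fin N ⊕ Fin M) ℝ)) ^ m k).prod) (mon i j)
    = ((L.map fun k => ((j k).descFactorial (m k) : ℝ)).prod) •
        mon i (fun k => if k ∈ L then j k - m k else j k) := by
  induction L with
  | nil =>
    simp only [List.map_nil, List.prod_nil, Module.End.one_apply, List.not_mem_nil, if_false,
      one_smul]
  | cons a L ih =>
    have ha : a ∉ L := (List.nodup_cons.mp hL).1
    have h2 : (fun k => if k ∈ L then j k - m k else j k) a = j a := by simp [ha]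
    rw [List.map_cons, List.prod_cons, Module.End.mul_apply, ih (List.nodup_cons.mp hL).2,
      map_smul, pderiv_pow_mon_inr, if_neg ha, List.map_cons, List.prod_cons, smul_smul]
    have h1 : (fun k => if k ∈ a :: L then j k - m k else j k)
        = Function.update (fun k => if k ∈ L then j k - m k else j k) a (j a - m a) := by
      funext x
      by_cases hx : x = a
      · subst hx; simp [ha]
      · simp [Function.update_of_ne hx, hx, List.mem_cons]
    rw [h1, mul_comm]

lemma Dxn_mon {N M : ℕ} (n i : Fin N → ℕ) (j : Fin M → ℕ) :
    Dxn (M := M) n (mon i j)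
    = ((∏ l, (i l).descFactorial (n l) : ℕ) : ℝ) • mon (fun l => i l - n l) j := by
  rw [Dxn, List.ofFn_eq_map, Dxn_list n _ (List.nodup_finRange N)]
  have h1 : (fun l => if l ∈ List.finRange N then i l - n l else i l)
      = fun l => i l - n l := by funext x; simp [List.mem_finRange]
  rw [h1]
  congr 1
  rw [← List.ofFn_eq_map, List.prod_ofFn]
  push_cast
  rfl

lemma Dym_mon {N M : ℕ} (m : Fin M → ℕ) (i : Fin N → ℕ) (j : Fin M → ℕ) :
    Dym (N := N) m (mon i j)
    = ((∏ k, (j k).descFactorial (m k) : ℕ) : ℝ) • mon i (fun k => j k - m k) := by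
  rw [Dym, List.ofFn_eq_map, Dym_list m _ (List.nodup_finRange M)]
  have h1 : (fun k => if k ∈ List.finRange M then j k - m k else j k)
      = fun k => j k - m k := by funext x; simp [List.mem_finRange]
  rw [h1]
  congr 1
  rw [← List.ofFn_eq_map, List.prod_ofFn]
  push_cast
  rfl

lemma prod_X_pow_inr {N M : ℕ} (m : Fin M → ℕ) :
    (∏ k : Fin M, X (Sum.inr k) ^ m k : MvPolynomial (Fin N ⊕ Fin M) ℝ)
      = mon (fun _ => 0) m := by
  simp only [X_pow_eq_monomial]
  rw [← monomial_sum_one, mon]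
  have hE : (∑ k : Fin M, Finsupp.single (Sum.inr k : Fin N ⊕ Fin M) (m k))
      = Finsupp.equivFunOnFinite.symm (Sum.elim (fun _ => 0) m) := by
    ext x
    rcases x with x | x
    · simp [Finsupp.single_apply]
    · simp [Finsupp.single_apply, Sum.inr.injEq]
  rw [hE]

lemma prod_X_pow_inl {N M : ℕ} (n : Fin N → ℕ) :
    (∏ l : Fin N, X (Sum.inl l) ^ n l : MvPolynomial (Fin N ⊕ Fin M) ℝ)
      = mon n (fun _ => 0) := by
  simp only [X_pow_eq_monomial]
  rw [← monomial_sum_one, mon]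
  have hE : (∑ l : Fin N, Finsupp.single (Sum.inl l : Fin N ⊕ Fin M) (n l))
      = Finsupp.equivFunOnFinite.symm (Sum.elim n (fun _ => 0)) := by
    ext x
    rcases x with x | x
    · simp [Finsupp.single_apply, Sum.inl.injEq]
    · simp [Finsupp.single_apply]
  rw [hE]

lemma mon_mul_mon {N M : ℕ} (i i' : Fin N → ℕ) (j j' : Fin M → ℕ) :
    mon i j * mon i' j' = mon (fun l => i l + i' l) (fun k => j k + j' k) := by
  rw [mon, mon, mon, monomial_mul, one_mul]
  have hE : Finsupp.equivFunOnFinite.symm (Sum.elim i j) + Finsupp.equivFunOnFinite.symm (Sum.elim i' j')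
      = Finsupp.equivFunOnFinite.symm (Sum.elim (fun l => i l + i' l) (fun k => j k + j' k)) := by
    ext x
    rcases x with x | x <;> simp
  rw [hE]

lemma euler_coeff (P : Polynomial ℝ) (s : ℕ) : (euler P).coeff s = s * P.coeff s := by
  rw [euler, LinearMap.comp_apply, LinearMap.mulLeft_apply]
  cases s with
  | zero => simp [Polynomial.mul_coeff_zero]
  | succ t =>
    rw [Polynomial.coeff_X_mul, Polynomial.coeff_derivative]
    push_cast
    ring

lemma euler_pow_coeff (k : ℕ) (P : Polynomial ℝ) (s : ℕ) :
    ((euler ^ k) P).coeff s = (s : ℝ) ^ k * P.coeff s := by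
  induction k generalizing P with
  | zero => simp
  | succ k ih =>
    rw [pow_succ', Module.End.mul_apply, euler_coeff, ih, pow_succ]
    ring

lemma aeval_euler_coeff (q P : Polynomial ℝ) (s : ℕ) :
    ((Polynomial.aeval euler q) P).coeff s = q.eval (s : ℝ) * P.coeff s := by
  induction q using Polynomial.induction_on' with
  | add p q hp hq =>
    rw [map_add, LinearMap.add_apply, Polynomial.coeff_add, hp, hq, Polynomial.eval_add]
    ring
  | monomial k a =>
    rw [Polynomial.aeval_monomial, Module.End.mul_apply, Module.algebraMap_end_apply,
      Polynomial.coeff_smul, smul_eq_mul, euler_pow_coeff, Polynomial.eval_monomial]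
    ring

lemma prod_range_cast_sub (a t : ℕ) :
    (∏ j ∈ Finset.range t, ((a : ℝ) - j)) = (a.descFactorial t : ℝ) := by
  induction t with
  | zero => simp
  | succ t ih =>
    rw [Finset.prod_range_succ, ih, Nat.descFactorial_succ]
    rcases lt_or_ge a t with h | h
    · rw [Nat.descFactorial_eq_zero_iff_lt.mpr h]; simp
    · rw [Nat.cast_mul, Nat.cast_sub h]; ring

lemma q1_eval {N : ℕ} (n 𝒩 : Fin N → ℕ) (s : ℕ) :
    (∏ l : Fin N, ∏ j ∈ Finset.range (n l),
        ((n l : ℝ) • Polynomial.X + Polynomial.C ((𝒩 l : ℝ) - j))).eval (s : ℝ)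
    = ((∏ l, (𝒩 l + s * n l).descFactorial (n l) : ℕ) : ℝ) := by
  rw [Polynomial.eval_prod, Nat.cast_prod]
  refine Finset.prod_congr rfl fun l _ => ?_
  rw [Polynomial.eval_prod, ← prod_range_cast_sub]
  refine Finset.prod_congr rfl fun j _ => ?_
  simp only [Polynomial.eval_add, Polynomial.eval_smul, Polynomial.eval_X, Polynomial.eval_C,
    smul_eq_mul]
  push_cast
  ring

lemma q2_eval {M : ℕ} (m ℳ : Fin M → ℕ) (s : ℕ) (hs : ∀ k, s * m k ≤ ℳ k) :
    (∏ k : Fin M, ∏ i ∈ Finset.range (m k),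
        (Polynomial.C ((ℳ k : ℝ) - i) - (m k : ℝ) • Polynomial.X)).eval (s : ℝ)
    = ((∏ k, (ℳ k - s * m k).descFactorial (m k) : ℕ) : ℝ) := by
  rw [Polynomial.eval_prod, Nat.cast_prod]
  refine Finset.prod_congr rfl fun k _ => ?_
  rw [Polynomial.eval_prod, ← prod_range_cast_sub]
  refine Finset.prod_congr rfl fun i _ => ?_
  simp only [Polynomial.eval_sub, Polynomial.eval_smul, Polynomial.eval_X, Polynomial.eval_C,
    smul_eq_mul]
  rw [Nat.cast_sub (hs k)]
  push_cast
  ring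

lemma mon_congr {N M : ℕ} {i i' : Fin N → ℕ} {j j' : Fin M → ℕ}
    (h1 : i = i') (h2 : j = j') : mon i j = mon i' j' := by rw [h1, h2]

lemma H1_mon {N M : ℕ} (n : Fin N → ℕ) (m : Fin M → ℕ) (i : Fin N → ℕ) (j : Fin M → ℕ) :
    H1 n m (mon i j)
    = ((∏ l, (i l).descFactorial (n l) : ℕ) : ℝ) •
        mon (fun l => i l - n l) (fun k => j k + m k)
      + ((∏ k, (j k).descFactorial (m k) : ℕ) : ℝ) •
        mon (fun l => i l + n l) (fun k => j k - m k) := by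
  rw [H1, LinearMap.add_apply, LinearMap.comp_apply, LinearMap.comp_apply,
    LinearMap.mulLeft_apply, LinearMap.mulLeft_apply, Dxn_mon, Dym_mon,
    prod_X_pow_inr, prod_X_pow_inl, mul_smul_comm, mul_smul_comm, mon_mul_mon, mon_mul_mon]
  have e1 : (fun l => 0 + (i l - n l)) = fun l => i l - n l := by funext x; omega
  have e2 : (fun k => m k + j k) = fun k => j k + m k := by funext x; omega
  have e3 : (fun l => n l + i l) = fun l => i l + n l := by funext x; omega
  have e4 : (fun k => 0 + (j k - m k)) = fun k => j k - m k := by funext x; omega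
  rw [mon_congr e1 e2, mon_congr e3 e4]


/-- for any polynomial `P` of degree at most `r` in `ζ = x^n / y^m`,
`H₁ (x^𝒩 y^ℳ P(ζ)) = x^𝒩 y^ℳ (H₁,red P)(ζ)`. -/
theorem H1_reduction {N M : ℕ} (hN : 1 ≤ N) (hM : 1 ≤ M)
    (n : Fin N → ℕ) (m : Fin M → ℕ) (hn : ∀ l, 0 < n l) (hm : ∀ k, 0 < m k)
    (𝒩 : Fin N → ℕ) (ℳ : Fin M → ℕ) (hrestr : ∃ l', 𝒩 l' < n l')
    (r : ℕ) (hr : r = Finset.univ.inf' ⟨⟨0, hM⟩, Finset.mem_univ _⟩ fun k => ℳ k / m k)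
    (P : Polynomial ℝ) (hP : P ∈ Polynomial.degreeLE ℝ (r : ℕ)) :
    H1 n m (expand n m 𝒩 ℳ r P) = expand n m 𝒩 ℳ r (H1red n m 𝒩 ℳ P) := by
  have hsm : ∀ s, s ≤ r → ∀ k, s * m k ≤ ℳ k := by
    intro s hs k
    have h1 : r ≤ ℳ k / m k := hr ▸ Finset.inf'_le _ (Finset.mem_univ k)
    exact (Nat.le_div_iff_mul_le (hm k)).mp (le_trans hs h1)
  have hA0 : (∏ l, (𝒩 l + 0 * n l).descFactorial (n l)) = 0 := by
    obtain ⟨l', hl'⟩ := hrestr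
    refine Finset.prod_eq_zero (Finset.mem_univ l') ?_
    have h : 𝒩 l' + 0 * n l' = 𝒩 l' := by ring
    rw [h]
    exact Nat.descFactorial_eq_zero_iff_lt.mpr hl'
  have hBr : (∏ k, (ℳ k - r * m k).descFactorial (m k)) = 0 := by
    obtain ⟨k₀, -, hk₀⟩ := Finset.exists_mem_eq_inf'
      (⟨⟨0, hM⟩, Finset.mem_univ _⟩ : (Finset.univ : Finset (Fin M)).Nonempty)
      (fun k => ℳ k / m k)
    refine Finset.prod_eq_zero (Finset.mem_univ k₀)
      (Nat.descFactorial_eq_zero_iff_lt.mpr ?_)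
    have h1 : ℳ k₀ / m k₀ * m k₀ + ℳ k₀ % m k₀ = ℳ k₀ := Nat.div_add_mod' _ _
    have h2 : ℳ k₀ % m k₀ < m k₀ := Nat.mod_lt _ (hm k₀)
    have h3 : r = ℳ k₀ / m k₀ := hr.trans hk₀
    rw [h3]
    omega
  have hPr1 : P.coeff (r + 1) = 0 :=
    Polynomial.coeff_eq_zero_of_degree_lt
      (lt_of_le_of_lt (Polynomial.mem_degreeLE.mp hP) (by exact_mod_cast lt_add_one r))
  have hcoeff : ∀ t ∈ Finset.range (r + 1), (H1red n m 𝒩 ℳ P).coeff t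
      = ((∏ l, (𝒩 l + (t + 1) * n l).descFactorial (n l) : ℕ) : ℝ) * P.coeff (t + 1)
        + (if t = 0 then (0 : ℝ)
           else ((∏ k, (ℳ k - (t - 1) * m k).descFactorial (m k) : ℕ) : ℝ) * P.coeff (t - 1)) := by
    intro t ht
    rw [Finset.mem_range] at ht
    rw [H1red, Polynomial.coeff_add, Polynomial.coeff_divX, aeval_euler_coeff, q1_eval]
    congr 1
    cases t with
    | zero => rw [Polynomial.mul_coeff_zero, Polynomial.coeff_X_zero, zero_mul, if_pos rfl]
    | succ u =>
      rw [Polynomial.coeff_X_mul, aeval_euler_coeff,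
        q2_eval _ _ u (hsm u (by omega)), if_neg (Nat.succ_ne_zero u), Nat.add_sub_cancel]
  have hL : H1 n m (expand n m 𝒩 ℳ r P)
      = (∑ u ∈ Finset.range r,
          (P.coeff (u + 1) * ((∏ l, (𝒩 l + (u + 1) * n l).descFactorial (n l) : ℕ) : ℝ)) •
            mon (fun l => 𝒩 l + u * n l) (fun k => ℳ k - u * m k))
        + ∑ s ∈ Finset.range r,
          (P.coeff s * ((∏ k, (ℳ k - s * m k).descFactorial (m k) : ℕ) : ℝ)) •
            mon (fun l => 𝒩 l + (s + 1) * n l) (fun k => ℳ k - (s + 1) * m k) := by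
    unfold _root_.expand
    rw [map_sum]
    simp only [map_smul, H1_mon, smul_add, smul_smul]
    rw [Finset.sum_add_distrib]
    congr 1
    · rw [Finset.sum_range_succ', hA0]
      simp only [Nat.cast_zero, mul_zero, zero_smul, add_zero]
      refine Finset.sum_congr rfl fun u hu => ?_
      rw [Finset.mem_range] at hu
      have e1 : (fun l => 𝒩 l + (u + 1) * n l - n l) = fun l => 𝒩 l + u * n l := by
        funext x; rw [Nat.succ_mul]; omega
      have e2 : (fun k => ℳ k - (u + 1) * m k + m k) = fun k => ℳ k - u * m k := by
        funext x
        have h := hsm (u + 1) (by omega) x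
        rw [Nat.succ_mul] at h ⊢
        omega
      rw [mon_congr e1 e2]
    · rw [Finset.sum_range_succ, hBr]
      simp only [Nat.cast_zero, mul_zero, zero_smul, add_zero]
      refine Finset.sum_congr rfl fun s hs => ?_
      have e3 : (fun l => 𝒩 l + s * n l + n l) = fun l => 𝒩 l + (s + 1) * n l := by
        funext x; rw [Nat.succ_mul]; omega
      have e4 : (fun k => ℳ k - s * m k - m k) = fun k => ℳ k - (s + 1) * m k := by
        funext x; rw [Nat.succ_mul]; omega
      rw [mon_congr e3 e4]
  have hR : expand n m 𝒩 ℳ r (H1red n m 𝒩 ℳ P)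
      = (∑ u ∈ Finset.range r,
          (P.coeff (u + 1) * ((∏ l, (𝒩 l + (u + 1) * n l).descFactorial (n l) : ℕ) : ℝ)) •
            mon (fun l => 𝒩 l + u * n l) (fun k => ℳ k - u * m k))
        + ∑ s ∈ Finset.range r,
          (P.coeff s * ((∏ k, (ℳ k - s * m k).descFactorial (m k) : ℕ) : ℝ)) •
            mon (fun l => 𝒩 l + (s + 1) * n l) (fun k => ℳ k - (s + 1) * m k) := by
    unfold _root_.expand
    rw [Finset.sum_congr rfl fun t ht => by rw [hcoeff t ht, add_smul], Finset.sum_add_distrib]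
    congr 1
    · rw [Finset.sum_range_succ, hPr1, mul_zero, zero_smul, add_zero]
      refine Finset.sum_congr rfl fun u hu => ?_
      rw [mul_comm]
    · rw [Finset.sum_range_succ']
      simp only [Nat.succ_ne_zero, if_neg, if_pos, Nat.add_sub_cancel, reduceIte, zero_smul,
        add_zero]
      refine Finset.sum_congr rfl fun u hu => ?_
      rw [mul_comm]
  rw [hL, hR]
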